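/- Error control of the L-scheme to Newton switching step (Proposition 3.1). Suppose: (i) the L-scheme identity with parameter L > 0 holds at step i (iterates ψ_{i-1}, ψ_i, previous time-step solution ψ_prev) tested against δ := ψ̃_{i+1} − ψ_i; (ii) the Newton identity holds at step i+1 with iterates ψ_i, ψ̃_{i+1} (same ψ_prev) tested against δ; (iii) there is a constant C_N ∈ [0,2) such that τ·|K(θ(ψ_i(x)))^{-1/2} M(ψ_i(x))(∇ψ_i(x)+e)|² ≤ C_N²·θ'(ψ_i(x)) for a.e. x ∈ Ω; (iv) D ⊆ Ω is a measurable set (the degenerate region) with θ'(ψ_i(x)) > 0 for a.e. x ∈ Ω\D; (v) σ : Ω → ℝ^d satisfies the equilibrated-flux identity ∫_Ω ⟨σ, ∇δ⟩ = −(1/τ) ∫_D (L(ψ_i−ψ_{i-1}) − (θ(ψ_i)−θ(ψ_{i-1})))·δ. Then ‖δ‖_{N,ψ_i} ≤ (2/(2−C_N))·(η_poten² + τ·η_flux²)^{1/2}, where η_poten² := ∫_{Ω\D} (L(ψ_i−ψ_{i-1}) − (θ(ψ_i)−θ(ψ_{i-1})))² / θ'(ψ_i) and η_flux² := ∫_Ω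 |K(θ(ψ_i))^{-1/2}[(K(θ(ψ_i)) − K(θ(ψ_{i-1})))(∇ψ_i + e) + σ]|². -/

import Mathlib

open MeasureTheory
open scoped RealInnerProductSpace


private lemma aux_CS {d : ℕ} (K : EuclideanSpace ℝ (Fin d) →L[ℝ] EuclideanSpace ℝ (Fin d))
    (hsym : ∀ v w : EuclideanSpace ℝ (Fin d), ⟪K v, w⟫ = ⟪v, K w⟫)
    (hpos : ∀ w : EuclideanSpace ℝ (Fin d), 0 ≤ ⟪K w, w⟫)
    (u v : EuclideanSpace ℝ (Fin d)) :
    ⟪K u, v⟫ ^ 2 ≤ ⟪K u, u⟫ * ⟪K v, v⟫ := by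
  have h : ∀ t : ℝ, 0 ≤ ⟪K v, v⟫ * (t * t) + (2 * ⟪K u, v⟫) * t + ⟪K u, u⟫ := by
    intro t
    have h0 := hpos (u + t • v)
    have hK : K (u + t • v) = K u + t • K v := by
      rw [map_add, ContinuousLinearMap.map_smul]
    rw [hK] at h0
    have hsym' : ⟪K v, u⟫ = ⟪K u, v⟫ := by
      rw [hsym v u, real_inner_comm]
    simp only [inner_add_left, inner_add_right, real_inner_smul_left,
      real_inner_smul_right, hsym'] at h0
    nlinarith [h0]
  have := discrim_le_zero h
  rw [discrim] at this
  nlinarith [this]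

private lemma aux_young1 (ε t a b : ℝ) (hε : 0 < ε) (ht : 0 < t) :
    a * b ≤ ε / 2 * (a ^ 2 / t) + 1 / (2 * ε) * (t * b ^ 2) := by
  have h2 : (0:ℝ) < 2 * ε * t := by positivity
  rw [← mul_le_mul_iff_right₀ h2]
  have e1 : 2 * ε * t * (ε / 2 * (a ^ 2 / t) + 1 / (2 * ε) * (t * b ^ 2))
      = ε ^ 2 * a ^ 2 + t ^ 2 * b ^ 2 := by
    field_simp
  rw [e1]
  nlinarith [sq_nonneg (ε * a - t * b)]

private lemma aux_young2 (ε a b u : ℝ) (hε : 0 < ε) (ha : 0 ≤ a) (hb : 0 ≤ b)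
    (h : u ^ 2 ≤ a * b) : -u ≤ ε / 2 * a + 1 / (2 * ε) * b := by
  have key : 0 ≤ ε ^ 2 * a + b + 2 * ε * u := by
    by_contra hG
    push_neg at hG
    have hw : 0 ≤ ε ^ 2 * a + b := by positivity
    have hu : 2 * ε * u < -(ε ^ 2 * a + b) := by linarith
    have hsq : (ε ^ 2 * a + b) ^ 2 < (2 * ε * u) ^ 2 := by nlinarith [hw, hu]
    have hub : (2 * ε * u) ^ 2 ≤ 4 * ε ^ 2 * (a * b) := by
      have := mul_le_mul_of_nonneg_left h (by positivity : (0:ℝ) ≤ 4 * ε ^ 2)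
      nlinarith [this]
    nlinarith [sq_nonneg (ε ^ 2 * a - b), hsq, hub]
  have h2 : (0:ℝ) < 2 * ε := by positivity
  have e1 : ε / 2 * a + 1 / (2 * ε) * b = (ε ^ 2 * a + b) / (2 * ε) := by
    field_simp
  rw [e1, le_div_iff₀ h2]
  nlinarith [key]

private lemma aux_young3 (τ CN t δ g q m : ℝ) (hτ : 0 < τ) (hCN : 0 ≤ CN)
    (ht : 0 ≤ t) (hg : 0 ≤ g) (hq : 0 ≤ q)
    (hm : m ^ 2 ≤ q * g) (hconv : τ * q ≤ CN ^ 2 * t) :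
    -(τ * (δ * m)) ≤ CN / 2 * (t * δ ^ 2 + τ * g) := by
  have ha := mul_le_mul_of_nonneg_left hm (by positivity : (0:ℝ) ≤ τ ^ 2 * δ ^ 2)
  have hb := mul_le_mul_of_nonneg_left hconv
    (by positivity : (0:ℝ) ≤ τ * δ ^ 2 * g)
  have h1 : (τ * (δ * m)) ^ 2 ≤ CN ^ 2 * (t * δ ^ 2) * (τ * g) := by nlinarith [ha, hb]
  have h2 : 0 ≤ CN / 2 * (t * δ ^ 2 + τ * g) := by positivity
  nlinarith [sq_nonneg (t * δ ^ 2 - τ * g), h1, h2,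
    sq_nonneg (CN / 2 * (t * δ ^ 2 + τ * g) + τ * (δ * m))]

private lemma aux_final (NN EE CN : ℝ) (hNN : 0 ≤ NN) (hEE : 0 ≤ EE)
    (hCN0 : 0 ≤ CN) (hCN2 : CN < 2)
    (key : ∀ ε : ℝ, 0 < ε → NN ≤ ε / 2 * EE + (1 / (2 * ε) + CN / 2) * NN) :
    Real.sqrt NN ≤ 2 / (2 - CN) * Real.sqrt EE := by
  have h2CN : 0 < 2 - CN := by linarith
  rcases eq_or_lt_of_le hNN with h | hNNpos
  · rw [← h, Real.sqrt_zero]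
    positivity
  rcases eq_or_lt_of_le hEE with h | hEEpos
  · exfalso
    have hε : (0:ℝ) < 2 / (2 - CN) := by positivity
    have hk := key _ hε
    rw [← h] at hk
    have h1 : 1 / (2 * (2 / (2 - CN))) = (2 - CN) / 4 := by
      rw [show 2 * (2 / (2 - CN)) = 4 / (2 - CN) by ring, one_div_div]
    rw [h1] at hk
    nlinarith [hk, hNNpos]
  · set n := Real.sqrt NN with hn
    set s := Real.sqrt EE with hs
    have hn2 : n ^ 2 = NN := Real.sq_sqrt hNN
    have hs2 : s ^ 2 = EE := Real.sq_sqrt hEE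
    have hnpos : 0 < n := Real.sqrt_pos.mpr hNNpos
    have hspos : 0 < s := Real.sqrt_pos.mpr hEEpos
    have hε : 0 < n / s := by positivity
    have hkey := key _ hε
    have h1 : n / s / 2 * EE = n * s / 2 := by
      rw [← hs2]; field_simp
    have h2 : (1 / (2 * (n / s)) + CN / 2) * NN = n * s / 2 + CN / 2 * NN := by
      rw [← hn2]; field_simp
    rw [h1, h2] at hkey
    rw [div_mul_eq_mul_div, le_div_iff₀ h2CN]
    nlinarith [hkey, hn2]

private lemma aux_int_sub {α : Type*} [MeasurableSpace α] {μ : Measure α}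
    {f g h : α → ℝ} (hf : Integrable f μ) (hg : Integrable g μ)
    (hfg : ∀ x, f x - g x = h x) : Integrable h μ :=
  (hf.sub hg).congr (Filter.Eventually.of_forall fun x => by
    rw [Pi.sub_apply, hfg x])

private lemma aux_int_add {α : Type*} [MeasurableSpace α] {μ : Measure α}
    {f g h : α → ℝ} (hf : Integrable f μ) (hg : Integrable g μ)
    (hfg : ∀ x, f x + g x = h x) : Integrable h μ :=
  (hf.add hg).congr (Filter.Eventually.of_forall fun x => by
    rw [Pi.add_apply, hfg x])

set_option maxHeartbeats 1000000 in
/-- **Error control of the L-scheme to Newton switching step** (Proposition 3.1).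
Given the L-scheme identity at step `i` and the Newton identity at step `i+1`
(both tested against `δ := ψ̃_{i+1} − ψ_i`), the non-dominance of the convection
term with constant `C_N ∈ [0,2)`, positivity of `θ'(ψ_i)` outside the degenerate
region `D`, and an equilibrated flux `σ`, one has
`‖δ‖_{N,ψ_i} ≤ (2/(2−C_N))·(η_poten² + τ·η_flux²)^{1/2}`. -/
theorem Lscheme_to_Newton_switching_error_control
    (d : ℕ) (hd : 1 ≤ d)
    (Ω : Set (EuclideanSpace ℝ (Fin d))) (hΩ : MeasurableSet Ω)
    -- saturation function and its derivative
    (θ θ' : ℝ → ℝ)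
    (hθdiff : ∀ s : ℝ, HasDerivAt θ (θ' s) s)
    (hθ'nonneg : ∀ s : ℝ, 0 ≤ θ' s)
    -- permeability, its inverse, and the derivative of `s ↦ K(θ(s))`
    (K Kinv M : ℝ → EuclideanSpace ℝ (Fin d) →L[ℝ] EuclideanSpace ℝ (Fin d))
    (κm κM : ℝ) (hκm : 0 < κm) (hκmM : κm ≤ κM)
    (hKsymm : ∀ (s : ℝ) (v w : EuclideanSpace ℝ (Fin d)), ⟪K s v, w⟫ = ⟪v, K s w⟫)
    (hKlower : ∀ (s : ℝ) (w : EuclideanSpace ℝ (Fin d)), κm * ‖w‖ ^ 2 ≤ ⟪K s w, w⟫)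
    (hKupper : ∀ (s : ℝ) (w : EuclideanSpace ℝ (Fin d)), ⟪K s w, w⟫ ≤ κM * ‖w‖ ^ 2)
    (hKinv : ∀ (s : ℝ) (w : EuclideanSpace ℝ (Fin d)),
      Kinv s (K s w) = w ∧ K s (Kinv s w) = w)
    (hM : ∀ s : ℝ, HasDerivAt (fun t : ℝ => K (θ t)) (M s) s)
    -- time step, source term, gravity direction, L-scheme parameter
    (τ : ℝ) (hτ : 0 < τ)
    (f : EuclideanSpace ℝ (Fin d) → ℝ)
    (e : EuclideanSpace ℝ (Fin d))
    (L : ℝ) (hL : 0 < L)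
    -- iterates and their gradients
    (ψprev ψim1 ψi ψt : EuclideanSpace ℝ (Fin d) → ℝ)
    (gψim1 gψi gψt : EuclideanSpace ℝ (Fin d) → EuclideanSpace ℝ (Fin d))
    (hgψim1 : ∀ x ∈ Ω, HasGradientAt ψim1 (gψim1 x) x)
    (hgψi : ∀ x ∈ Ω, HasGradientAt ψi (gψi x) x)
    (hgψt : ∀ x ∈ Ω, HasGradientAt ψt (gψt x) x)
    (δ : EuclideanSpace ℝ (Fin d) → ℝ)
    (hδ : δ = fun x => ψt x - ψi x)
    (gδ : EuclideanSpace ℝ (Fin d) → EuclideanSpace ℝ (Fin d))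
    (hgδ : gδ = fun x => gψt x - gψi x)
    -- (i) L-scheme identity at step `i` tested against `δ`
    (hLscheme :
      (∫ x in Ω, L * (ψi x - ψim1 x) * δ x)
        + τ * ∫ x in Ω, ⟪K (θ (ψim1 x)) (gψi x + e), gδ x⟫
      = τ * (∫ x in Ω, f x * δ x)
        - ∫ x in Ω, (θ (ψim1 x) - θ (ψprev x)) * δ x)
    -- (ii) Newton identity at step `i+1` (iterates `ψ_i`, `ψ̃_{i+1}`) tested against `δ`
    (hNewton :
      (∫ x in Ω, θ' (ψi x) * (ψt x - ψi x) * δ x)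
        + τ * (∫ x in Ω, ⟪K (θ (ψi x)) (gψt x + e), gδ x⟫)
        + τ * (∫ x in Ω, (ψt x - ψi x) * ⟪M (ψi x) (gψi x + e), gδ x⟫)
      = τ * (∫ x in Ω, f x * δ x)
        - ∫ x in Ω, (θ (ψi x) - θ (ψprev x)) * δ x)
    -- (iii) the convection term is not dominant
    (CN : ℝ) (hCN0 : 0 ≤ CN) (hCN2 : CN < 2)
    (hconv : ∀ᵐ x ∂(volume.restrict Ω),
      τ * ⟪Kinv (θ (ψi x)) (M (ψi x) (gψi x + e)), M (ψi x) (gψi x + e)⟫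
        ≤ CN ^ 2 * θ' (ψi x))
    -- (iv) degenerate region
    (D : Set (EuclideanSpace ℝ (Fin d))) (hD : MeasurableSet D) (hDΩ : D ⊆ Ω)
    (hθ'pos : ∀ᵐ x ∂(volume.restrict (Ω \ D)), 0 < θ' (ψi x))
    -- (v) equilibrated-flux identity
    (σ : EuclideanSpace ℝ (Fin d) → EuclideanSpace ℝ (Fin d))
    (hσ : (∫ x in Ω, ⟪σ x, gδ x⟫)
      = -(1 / τ) * ∫ x in D,
          (L * (ψi x - ψim1 x) - (θ (ψi x) - θ (ψim1 x))) * δ x)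
    -- integrability of all integrands appearing
    (hI1 : IntegrableOn (fun x => L * (ψi x - ψim1 x) * δ x) Ω)
    (hI2 : IntegrableOn (fun x => ⟪K (θ (ψim1 x)) (gψi x + e), gδ x⟫) Ω)
    (hI3 : IntegrableOn (fun x => f x * δ x) Ω)
    (hI4 : IntegrableOn (fun x => (θ (ψim1 x) - θ (ψprev x)) * δ x) Ω)
    (hI5 : IntegrableOn (fun x => θ' (ψi x) * (ψt x - ψi x) * δ x) Ω)
    (hI6 : IntegrableOn (fun x => ⟪K (θ (ψi x)) (gψt x + e), gδ x⟫) Ω)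
    (hI7 : IntegrableOn (fun x => (ψt x - ψi x) * ⟪M (ψi x) (gψi x + e), gδ x⟫) Ω)
    (hI8 : IntegrableOn (fun x => (θ (ψi x) - θ (ψprev x)) * δ x) Ω)
    (hI9 : IntegrableOn (fun x => ⟪σ x, gδ x⟫) Ω)
    (hI10 : IntegrableOn
      (fun x => (L * (ψi x - ψim1 x) - (θ (ψi x) - θ (ψim1 x))) * δ x) D)
    (hI11 : IntegrableOn
      (fun x => θ' (ψi x) * δ x ^ 2 + τ * ⟪K (θ (ψi x)) (gδ x), gδ x⟫) Ω)
    (hI12 : IntegrableOn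
      (fun x => (L * (ψi x - ψim1 x) - (θ (ψi x) - θ (ψim1 x))) ^ 2 / θ' (ψi x))
      (Ω \ D))
    (hI13 : IntegrableOn
      (fun x => ⟪Kinv (θ (ψi x))
            ((K (θ (ψi x)) - K (θ (ψim1 x))) (gψi x + e) + σ x),
          (K (θ (ψi x)) - K (θ (ψim1 x))) (gψi x + e) + σ x⟫) Ω) :
    Real.sqrt (∫ x in Ω,
        (θ' (ψi x) * δ x ^ 2 + τ * ⟪K (θ (ψi x)) (gδ x), gδ x⟫))
      ≤ (2 / (2 - CN)) * Real.sqrt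
          ((∫ x in Ω \ D,
              (L * (ψi x - ψim1 x) - (θ (ψi x) - θ (ψim1 x))) ^ 2 / θ' (ψi x))
            + τ * ∫ x in Ω,
                ⟪Kinv (θ (ψi x))
                    ((K (θ (ψi x)) - K (θ (ψim1 x))) (gψi x + e) + σ x),
                  (K (θ (ψi x)) - K (θ (ψim1 x))) (gψi x + e) + σ x⟫) := by
    -- basic positivity facts for K and Kinv
  have hKpos : ∀ (s : ℝ) (w : EuclideanSpace ℝ (Fin d)), 0 ≤ ⟪K s w, w⟫ :=
    fun s w => le_trans (by positivity) (hKlower s w)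
  have hKinvpos : ∀ (s : ℝ) (w : EuclideanSpace ℝ (Fin d)), 0 ≤ ⟪Kinv s w, w⟫ := by
    intro s w
    have h : ⟪Kinv s w, w⟫ = ⟪K s (Kinv s w), Kinv s w⟫ := by
      rw [(hKinv s w).2, real_inner_comm]
    rw [h]; exact hKpos _ _
  -- master Cauchy–Schwarz inequality
  have hCS : ∀ (s : ℝ) (w v : EuclideanSpace ℝ (Fin d)),
      ⟪w, v⟫ ^ 2 ≤ ⟪Kinv s w, w⟫ * ⟪K s v, v⟫ := by
    intro s w v
    have h1 := aux_CS (K s) (hKsymm s) (hKpos s) (Kinv s w) v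
    rw [(hKinv s w).2, real_inner_comm (Kinv s w) w] at h1
    exact h1
  -- rewrite `ψt - ψi` as `δ` in Newton identity and integrability facts
  have e5 : (fun x => θ' (ψi x) * (ψt x - ψi x) * δ x)
      = fun x => θ' (ψi x) * δ x ^ 2 := by
    funext x; simp only [hδ]; ring
  have e7 : (fun x => (ψt x - ψi x) * ⟪M (ψi x) (gψi x + e), gδ x⟫)
      = fun x => δ x * ⟪M (ψi x) (gψi x + e), gδ x⟫ := by
    funext x; simp only [hδ]
  rw [e5] at hNewton hI5
  rw [e7] at hNewton hI7
  -- name all the integrals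
  set NN := ∫ x in Ω, (θ' (ψi x) * δ x ^ 2 + τ * ⟪K (θ (ψi x)) (gδ x), gδ x⟫)
    with hNNdef
  set Ep := ∫ x in Ω \ D,
      (L * (ψi x - ψim1 x) - (θ (ψi x) - θ (ψim1 x))) ^ 2 / θ' (ψi x) with hEpdef
  set Ef := ∫ x in Ω,
      ⟪Kinv (θ (ψi x)) ((K (θ (ψi x)) - K (θ (ψim1 x))) (gψi x + e) + σ x),
        (K (θ (ψi x)) - K (θ (ψim1 x))) (gψi x + e) + σ x⟫ with hEfdef
  set P := ∫ x in Ω, θ' (ψi x) * δ x ^ 2 with hPdef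
  set Pd := ∫ x in Ω \ D, θ' (ψi x) * δ x ^ 2 with hPddef
  set G := ∫ x in Ω, ⟪K (θ (ψi x)) (gδ x), gδ x⟫ with hGdef
  set Q1 := ∫ x in Ω, L * (ψi x - ψim1 x) * δ x with hQ1def
  set Q2 := ∫ x in Ω, ⟪K (θ (ψim1 x)) (gψi x + e), gδ x⟫ with hQ2def
  set Q4 := ∫ x in Ω, (θ (ψim1 x) - θ (ψprev x)) * δ x with hQ4def
  set Q5 := ∫ x in Ω, ⟪K (θ (ψi x)) (gψi x + e), gδ x⟫ with hQ5def
  set Q6 := ∫ x in Ω, ⟪K (θ (ψi x)) (gψt x + e), gδ x⟫ with hQ6def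
  set Q7 := ∫ x in Ω, δ x * ⟪M (ψi x) (gψi x + e), gδ x⟫ with hQ7def
  set Q8 := ∫ x in Ω, (θ (ψi x) - θ (ψprev x)) * δ x with hQ8def
  set Qs := ∫ x in Ω, ⟪σ x, gδ x⟫ with hQsdef
  set Qθθ := ∫ x in Ω, (θ (ψi x) - θ (ψim1 x)) * δ x with hQθθdef
  set QΔ := ∫ x in Ω,
      ⟪(K (θ (ψi x)) - K (θ (ψim1 x))) (gψi x + e), gδ x⟫ with hQΔdef
  set QF := ∫ x in Ω,
      ⟪(K (θ (ψi x)) - K (θ (ψim1 x))) (gψi x + e) + σ x, gδ x⟫ with hQFdef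
  set QR := ∫ x in Ω,
      (L * (ψi x - ψim1 x) - (θ (ψi x) - θ (ψim1 x))) * δ x with hQRdef
  set QRd := ∫ x in Ω \ D,
      (L * (ψi x - ψim1 x) - (θ (ψi x) - θ (ψim1 x))) * δ x with hQRddef
  set QRD := ∫ x in D,
      (L * (ψi x - ψim1 x) - (θ (ψi x) - θ (ψim1 x))) * δ x with hQRDdef
  -- pointwise decompositions
  have hKsplit : ∀ x, ⟪K (θ (ψi x)) (gψi x + e), gδ x⟫
      = ⟪K (θ (ψi x)) (gψt x + e), gδ x⟫ - ⟪K (θ (ψi x)) (gδ x), gδ x⟫ := by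
    intro x
    have h1 : K (θ (ψi x)) (gδ x)
        = K (θ (ψi x)) (gψt x + e) - K (θ (ψi x)) (gψi x + e) := by
      rw [← map_sub]
      congr 1
      rw [hgδ]
      abel
    rw [h1, inner_sub_left]
    ring
  have hΔKsplit : ∀ x, ⟪(K (θ (ψi x)) - K (θ (ψim1 x))) (gψi x + e), gδ x⟫
      = ⟪K (θ (ψi x)) (gψi x + e), gδ x⟫ - ⟪K (θ (ψim1 x)) (gψi x + e), gδ x⟫ := by
    intro x
    rw [ContinuousLinearMap.sub_apply, inner_sub_left]
  have hFsplit : ∀ x, ⟪(K (θ (ψi x)) - K (θ (ψim1 x))) (gψi x + e) + σ x, gδ x⟫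
      = ⟪(K (θ (ψi x)) - K (θ (ψim1 x))) (gψi x + e), gδ x⟫ + ⟪σ x, gδ x⟫ := by
    intro x
    rw [inner_add_left]
  -- integrability facts
  have hIθδ2 : IntegrableOn (fun x => θ' (ψi x) * δ x ^ 2) Ω := hI5
  have hIKgδ : IntegrableOn (fun x => ⟪K (θ (ψi x)) (gδ x), gδ x⟫) Ω := by
    have h1 : IntegrableOn (fun x => τ * ⟪K (θ (ψi x)) (gδ x), gδ x⟫) Ω :=
      aux_int_sub hI11 hIθδ2 (fun x => by ring)
    have h3 := h1.const_mul (1 / τ)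
    have h4 : (fun x => 1 / τ * (τ * ⟪K (θ (ψi x)) (gδ x), gδ x⟫))
        = fun x => ⟪K (θ (ψi x)) (gδ x), gδ x⟫ := by
      funext x; field_simp
    rwa [h4] at h3
  have hIQ5 : IntegrableOn (fun x => ⟪K (θ (ψi x)) (gψi x + e), gδ x⟫) Ω :=
    aux_int_sub hI6 hIKgδ (fun x => by rw [hKsplit x])
  have hIΔK : IntegrableOn
      (fun x => ⟪(K (θ (ψi x)) - K (θ (ψim1 x))) (gψi x + e), gδ x⟫) Ω :=
    aux_int_sub hIQ5 hI2 (fun x => by rw [hΔKsplit x])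
  have hIF : IntegrableOn
      (fun x => ⟪(K (θ (ψi x)) - K (θ (ψim1 x))) (gψi x + e) + σ x, gδ x⟫) Ω :=
    aux_int_add hIΔK hI9 (fun x => by rw [hFsplit x])
  have hIθθδ : IntegrableOn (fun x => (θ (ψi x) - θ (ψim1 x)) * δ x) Ω :=
    aux_int_sub hI8 hI4 (fun x => by ring)
  have hIRδ : IntegrableOn
      (fun x => (L * (ψi x - ψim1 x) - (θ (ψi x) - θ (ψim1 x))) * δ x) Ω :=
    aux_int_sub hI1 hIθθδ (fun x => by ring)
  -- identities between the integrals
  have hNNsplit : NN = P + τ * G := by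
    rw [hNNdef, hPdef, hGdef, integral_add hIθδ2 (hIKgδ.const_mul τ),
      integral_const_mul]
  have hGsplit : G = Q6 - Q5 := by
    rw [hGdef, hQ6def, hQ5def, ← integral_sub hI6 hIQ5]
    rw [show (fun x => ⟪K (θ (ψi x)) (gδ x), gδ x⟫)
        = fun x => ⟪K (θ (ψi x)) (gψt x + e), gδ x⟫
          - ⟪K (θ (ψi x)) (gψi x + e), gδ x⟫ from
      funext fun x => by rw [hKsplit x]; ring]
  have hQθθsplit : Q8 - Q4 = Qθθ := by
    rw [hQ8def, hQ4def, hQθθdef, ← integral_sub hI8 hI4]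
    rw [show (fun x => (θ (ψi x) - θ (ψprev x)) * δ x
        - (θ (ψim1 x) - θ (ψprev x)) * δ x)
        = fun x => (θ (ψi x) - θ (ψim1 x)) * δ x from
      funext fun x => by ring]
  have hQRsplit : QR = Q1 - Qθθ := by
    rw [hQRdef, hQ1def, hQθθdef, ← integral_sub hI1 hIθθδ]
    rw [show (fun x => (L * (ψi x - ψim1 x) - (θ (ψi x) - θ (ψim1 x))) * δ x)
        = fun x => L * (ψi x - ψim1 x) * δ x - (θ (ψi x) - θ (ψim1 x)) * δ x from
      funext fun x => by ring]
  have hQΔsplit : QΔ = Q5 - Q2 := by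
    rw [hQΔdef, hQ5def, hQ2def, ← integral_sub hIQ5 hI2]
    rw [show (fun x => ⟪(K (θ (ψi x)) - K (θ (ψim1 x))) (gψi x + e), gδ x⟫)
        = fun x => ⟪K (θ (ψi x)) (gψi x + e), gδ x⟫
          - ⟪K (θ (ψim1 x)) (gψi x + e), gδ x⟫ from
      funext fun x => by rw [hΔKsplit x]]
  have hQFsplit : QF = QΔ + Qs := by
    rw [hQFdef, hQΔdef, hQsdef, ← integral_add hIΔK hI9]
    rw [show (fun x => ⟪(K (θ (ψi x)) - K (θ (ψim1 x))) (gψi x + e) + σ x, gδ x⟫)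
        = fun x => ⟪(K (θ (ψi x)) - K (θ (ψim1 x))) (gψi x + e), gδ x⟫
          + ⟪σ x, gδ x⟫ from
      funext fun x => by rw [hFsplit x]]
  have hQRdiff : QRd = QR - QRD := by
    rw [hQRddef, hQRdef, hQRDdef]
    exact integral_diff hD hIRδ hDΩ
  have hQRD : QRD = -τ * Qs := by
    rw [hσ]
    field_simp
  -- the main identity : NN = QRd - τ * QF - τ * Q7
  have hτG : τ * G = τ * Q6 - τ * Q5 := by rw [hGsplit]; ring
  have hτQF : τ * QF = τ * Q5 - τ * Q2 + τ * Qs := by rw [hQFsplit, hQΔsplit]; ring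
  have hmain : NN = QRd - τ * QF - τ * Q7 := by
    have h1 : P + τ * Q6 + τ * Q7 - (Q1 + τ * Q2) = Q4 - Q8 := by
      linarith [hNewton, hLscheme]
    have h2 : Q4 - Q8 = -Qθθ := by linarith [hQθθsplit]
    linarith [hNNsplit, hτG, hτQF, hQRdiff, hQRsplit, hQRD, h1, h2]
  -- nonnegativity of the two sides
  have hNN0 : 0 ≤ NN := by
    rw [hNNdef]
    refine setIntegral_nonneg hΩ fun x _ => ?_
    have := hKpos (θ (ψi x)) (gδ x)
    have := hθ'nonneg (ψi x)
    positivity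
  have hEp0 : 0 ≤ Ep := by
    rw [hEpdef]
    exact setIntegral_nonneg (hΩ.diff hD) fun x _ =>
      div_nonneg (sq_nonneg _) (hθ'nonneg _)
  have hEf0 : 0 ≤ Ef := by
    rw [hEfdef]
    exact setIntegral_nonneg hΩ fun x _ => hKinvpos _ _
  have hEE0 : 0 ≤ Ep + τ * Ef := by positivity
  -- the key inequality
  have key : ∀ ε : ℝ, 0 < ε →
      NN ≤ ε / 2 * (Ep + τ * Ef) + (1 / (2 * ε) + CN / 2) * NN := by
    intro ε hε
    -- (a) potential part
    have hA : QRd ≤ ε / 2 * Ep + 1 / (2 * ε) * Pd := by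
      have hmono : (∫ x in Ω \ D,
          (L * (ψi x - ψim1 x) - (θ (ψi x) - θ (ψim1 x))) * δ x)
          ≤ ∫ x in Ω \ D,
            (ε / 2 * ((L * (ψi x - ψim1 x) - (θ (ψi x) - θ (ψim1 x))) ^ 2 / θ' (ψi x))
              + 1 / (2 * ε) * (θ' (ψi x) * δ x ^ 2)) := by
        refine integral_mono_ae (hIRδ.mono_set Set.diff_subset)
          (((hI12.const_mul (ε / 2)).add
            ((hIθδ2.mono_set Set.diff_subset).const_mul (1 / (2 * ε))))) ?_
        exact hθ'pos.mono fun x hx => aux_young1 ε (θ' (ψi x)) _ (δ x) hε hx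
      rw [integral_add (hI12.const_mul (ε / 2))
        ((hIθδ2.mono_set Set.diff_subset).const_mul (1 / (2 * ε))),
        integral_const_mul, integral_const_mul] at hmono
      exact hmono
    have hAD : Pd ≤ P := by
      rw [hPddef, hPdef]
      refine setIntegral_mono_set hIθδ2 ?_ (Set.diff_subset.eventuallyLE)
      exact Filter.Eventually.of_forall fun x =>
        mul_nonneg (hθ'nonneg _) (sq_nonneg _)
    -- (b) flux part
    have hB : τ * -QF ≤ τ * (ε / 2 * Ef + 1 / (2 * ε) * G) := by
      refine mul_le_mul_of_nonneg_left ?_ hτ.le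
      have hmono : (∫ x in Ω,
          -(⟪(K (θ (ψi x)) - K (θ (ψim1 x))) (gψi x + e) + σ x, gδ x⟫))
          ≤ ∫ x in Ω,
            (ε / 2 * ⟪Kinv (θ (ψi x))
                ((K (θ (ψi x)) - K (θ (ψim1 x))) (gψi x + e) + σ x),
                (K (θ (ψi x)) - K (θ (ψim1 x))) (gψi x + e) + σ x⟫
              + 1 / (2 * ε) * ⟪K (θ (ψi x)) (gδ x), gδ x⟫) := by
        refine integral_mono_ae hIF.neg
          ((hI13.const_mul (ε / 2)).add (hIKgδ.const_mul (1 / (2 * ε)))) ?_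
        refine Filter.Eventually.of_forall fun x => ?_
        exact aux_young2 ε _ _ _ hε (hKinvpos _ _) (hKpos _ _)
          (hCS (θ (ψi x)) _ (gδ x))
      rw [integral_neg, integral_add (hI13.const_mul (ε / 2))
        (hIKgδ.const_mul (1 / (2 * ε))), integral_const_mul, integral_const_mul]
        at hmono
      exact hmono
    -- (c) convection part
    have hC : -(τ * Q7) ≤ CN / 2 * NN := by
      have hmono : (∫ x in Ω,
          -(τ * (δ x * ⟪M (ψi x) (gψi x + e), gδ x⟫)))
          ≤ ∫ x in Ω, CN / 2 *
            (θ' (ψi x) * δ x ^ 2 + τ * ⟪K (θ (ψi x)) (gδ x), gδ x⟫) := by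
        refine integral_mono_ae ((hI7.const_mul τ).neg)
          (hI11.const_mul (CN / 2)) ?_
        refine hconv.mono fun x hx => ?_
        exact aux_young3 τ CN (θ' (ψi x)) (δ x) _ _ _ hτ hCN0
          (hθ'nonneg _) (hKpos _ _) (hKinvpos _ _)
          (hCS (θ (ψi x)) _ (gδ x)) hx
      rw [integral_neg, integral_const_mul, integral_const_mul] at hmono
      exact hmono
    have hADs : 1 / (2 * ε) * Pd ≤ 1 / (2 * ε) * P :=
      mul_le_mul_of_nonneg_left hAD (by positivity)
    have hNNs : 1 / (2 * ε) * P + 1 / (2 * ε) * (τ * G) = 1 / (2 * ε) * NN := by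
      rw [hNNsplit]; ring
    have hBs : τ * (ε / 2 * Ef + 1 / (2 * ε) * G)
        = ε / 2 * (τ * Ef) + 1 / (2 * ε) * (τ * G) := by ring
    linarith [hmain, hA, hB, hC, hADs, hNNs, hBs]
  exact aux_final NN (Ep + τ * Ef) CN hNN0 hEE0 hCN0 hCN2 key
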